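/- (Per-round steering-gap decomposition.) Let U : ℝ^{HSA} → ℝ be L_U-Lipschitz in ‖·‖₁. Let μ̄ be a feasible occupancy measure in the true model M*, with induced policy π̄, let M̂ be another model, π_* a policy, and suppose U(μ^{π*}_{M*}) ≤ U(μ^{π_*}_{M̂}) for the true maximizer π* (optimism). Then U(μ^{π*}_{M*}) − U(μ̄) ≤ L_U·H·Σ_{h,s} μ̄_h(s)·‖π_{*,h}(·|s) − π̄_h(·|s)‖₁ + L_U·(2H+1)·‖μ^{π̄}_{M̂} − μ̄‖₁, where μ̄_h(s) = Σ_a μ̄_h(s,a). -/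
import Mathlib


open Finset

def IsPolicy {S A : Type*} [Fintype A] (π : ℕ → S → A → ℝ) : Prop :=
  ∀ h s, (∀ a, 0 ≤ π h s a) ∧ ∑ a, π h s a = 1

def IsKernel {S A : Type*} [Fintype S] (P : ℕ → S → A → S → ℝ) : Prop :=
  ∀ h s a, (∀ s', 0 ≤ P h s a s') ∧ ∑ s', P h s a s' = 1

def IsProb {S : Type*} [Fintype S] (μ₁ : S → ℝ) : Prop :=
  (∀ s, 0 ≤ μ₁ s) ∧ ∑ s, μ₁ s = 1

noncomputable def occ {S A : Type*} [Fintype S] [Fintype A] (μ₁ : S → ℝ)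
    (P : ℕ → S → A → S → ℝ) (π : ℕ → S → A → ℝ) : ℕ → S → A → ℝ
  | 0 => fun s a => μ₁ s * π 0 s a
  | (h+1) => fun s a => π (h+1) s a * ∑ s', ∑ a', P h s' a' s * occ μ₁ P π h s' a'



lemma occ_nonneg {S A : Type*} [Fintype S] [Fintype A]
    {μ₁ : S → ℝ} (hμ₁ : IsProb μ₁)
    {P : ℕ → S → A → S → ℝ} (hP : IsKernel P)
    {π : ℕ → S → A → ℝ} (hπ : IsPolicy π) :
    ∀ h s a, 0 ≤ occ μ₁ P π h s a := by
  intro h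
  induction h with
  | zero => intro s a; exact mul_nonneg (hμ₁.1 s) ((hπ 0 s).1 a)
  | succ h ih =>
    intro s a
    exact mul_nonneg ((hπ _ s).1 a) (Finset.sum_nonneg fun s' _ =>
      Finset.sum_nonneg fun a' _ => mul_nonneg ((hP h s' a').1 s) (ih s' a'))

lemma occ_policy_diff {S A : Type*} [Fintype S] [Fintype A]
    (μ₁ : S → ℝ) (hμ₁ : IsProb μ₁)
    (P : ℕ → S → A → S → ℝ) (hP : IsKernel P)
    (π π' : ℕ → S → A → ℝ) (hπ : IsPolicy π) (hπ' : IsPolicy π') :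
    ∀ h, ∑ s, ∑ a, |occ μ₁ P π h s a - occ μ₁ P π' h s a| ≤
      ∑ k ∈ Finset.range (h+1), ∑ s,
        (∑ a, occ μ₁ P π' k s a) * (∑ a, |π k s a - π' k s a|) := by
  intro h
  induction h with
  | zero =>
    rw [Finset.sum_range_one]
    apply Finset.sum_le_sum
    intro s _
    show ∑ a, |μ₁ s * π 0 s a - μ₁ s * π' 0 s a| ≤
      (∑ a, μ₁ s * π' 0 s a) * (∑ a, |π 0 s a - π' 0 s a|)
    rw [← Finset.mul_sum, (hπ' 0 s).2, mul_one, Finset.mul_sum]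
    apply Finset.sum_le_sum
    intro a _
    rw [← mul_sub, abs_mul, abs_of_nonneg (hμ₁.1 s)]
  | succ h ih =>
    rw [Finset.sum_range_succ]
    set X : S → ℝ := fun s => ∑ s', ∑ a', P h s' a' s * occ μ₁ P π h s' a' with hX
    set X' : S → ℝ := fun s => ∑ s', ∑ a', P h s' a' s * occ μ₁ P π' h s' a' with hX'
    have hX'nn : ∀ s, 0 ≤ X' s := fun s => Finset.sum_nonneg fun s' _ =>
      Finset.sum_nonneg fun a' _ => mul_nonneg ((hP h s' a').1 s) (occ_nonneg hμ₁ hP hπ' h s' a')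
    have step1 : ∑ s, ∑ a, |occ μ₁ P π (h+1) s a - occ μ₁ P π' (h+1) s a| ≤
        (∑ s, |X s - X' s|) + ∑ s,
          (∑ a, occ μ₁ P π' (h+1) s a) * (∑ a, |π (h+1) s a - π' (h+1) s a|) := by
      rw [← Finset.sum_add_distrib]
      apply Finset.sum_le_sum
      intro s _
      have hmarg : ∑ a, occ μ₁ P π' (h+1) s a = X' s := by
        show ∑ a, π' (h+1) s a * X' s = X' s
        rw [← Finset.sum_mul, (hπ' (h+1) s).2, one_mul]
      rw [hmarg]
      calc ∑ a, |occ μ₁ P π (h+1) s a - occ μ₁ P π' (h+1) s a|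
          = ∑ a, |π (h+1) s a * X s - π' (h+1) s a * X' s| := rfl
        _ ≤ ∑ a, (π (h+1) s a * |X s - X' s| + |π (h+1) s a - π' (h+1) s a| * X' s) := by
            apply Finset.sum_le_sum
            intro a _
            have : π (h+1) s a * X s - π' (h+1) s a * X' s =
                π (h+1) s a * (X s - X' s) + (π (h+1) s a - π' (h+1) s a) * X' s := by ring
            rw [this]
            refine (abs_add_le _ _).trans ?_
            rw [abs_mul, abs_mul, abs_of_nonneg ((hπ (h+1) s).1 a), abs_of_nonneg (hX'nn s)]
        _ = |X s - X' s| + X' s * ∑ a, |π (h+1) s a - π' (h+1) s a| := by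
            rw [Finset.sum_add_distrib, ← Finset.sum_mul, (hπ (h+1) s).2, one_mul,
              Finset.mul_sum]
            congr 1
            apply Finset.sum_congr rfl
            intro a _; ring
    have step2 : ∑ s, |X s - X' s| ≤
        ∑ s, ∑ a, |occ μ₁ P π h s a - occ μ₁ P π' h s a| := by
      calc ∑ s, |X s - X' s|
          = ∑ s, |∑ s', ∑ a', P h s' a' s * (occ μ₁ P π h s' a' - occ μ₁ P π' h s' a')| := by
            apply Finset.sum_congr rfl; intro s _
            congr 1
            rw [hX, hX', ← Finset.sum_sub_distrib]
            apply Finset.sum_congr rfl; intro s' _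
            rw [← Finset.sum_sub_distrib]
            apply Finset.sum_congr rfl; intro a' _; ring
        _ ≤ ∑ s, ∑ s', ∑ a', P h s' a' s * |occ μ₁ P π h s' a' - occ μ₁ P π' h s' a'| := by
            apply Finset.sum_le_sum; intro s _
            refine (Finset.abs_sum_le_sum_abs _ _).trans ?_
            apply Finset.sum_le_sum; intro s' _
            refine (Finset.abs_sum_le_sum_abs _ _).trans ?_
            apply Finset.sum_le_sum; intro a' _
            rw [abs_mul, abs_of_nonneg ((hP h s' a').1 s)]
        _ = ∑ s', ∑ a', (∑ s, P h s' a' s) * |occ μ₁ P π h s' a' - occ μ₁ P π' h s' a'| := by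
            rw [Finset.sum_comm]
            apply Finset.sum_congr rfl; intro s' _
            rw [Finset.sum_comm]
            apply Finset.sum_congr rfl; intro a' _
            rw [Finset.sum_mul]
        _ = ∑ s', ∑ a', |occ μ₁ P π h s' a' - occ μ₁ P π' h s' a'| := by
            apply Finset.sum_congr rfl; intro s' _
            apply Finset.sum_congr rfl; intro a' _
            rw [(hP h s' a').2, one_mul]
    linarith [step1, step2, ih]


/-- Per-round steering-gap decomposition: under optimism
`U(μ^{π*}_{M*}) ≤ U(μ^{π_*}_{M̂})` for the true maximizer π*, and L_U-Lipschitzness of U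
in ‖·‖₁, the per-round steering gap decomposes into a population convergence term and a
model estimation term. Here μ̄ = μ^{π̄}_{M*}. -/
theorem stmt15 {S A : Type*} [Fintype S] [Fintype A]
    (H : ℕ) (μ₁ : S → ℝ) (hμ₁ : IsProb μ₁)
    (P Phat : ℕ → S → A → S → ℝ) (hP : IsKernel P) (hPhat : IsKernel Phat)
    (πstar πopt πb : ℕ → S → A → ℝ)
    (hπstar : IsPolicy πstar) (hπopt : IsPolicy πopt) (hπb : IsPolicy πb)
    (LU : ℝ) (hLU : 0 ≤ LU)
    (U : (ℕ → S → A → ℝ) → ℝ)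
    (hLip : ∀ μ ν, |U μ - U ν| ≤
      LU * ∑ h ∈ Finset.range H, ∑ s, ∑ a, |μ h s a - ν h s a|)
    (hmaximizer : ∀ π, IsPolicy π → U (occ μ₁ P π) ≤ U (occ μ₁ P πstar))
    (hopt : U (occ μ₁ P πstar) ≤ U (occ μ₁ Phat πopt)) :
    U (occ μ₁ P πstar) - U (occ μ₁ P πb) ≤
      LU * H * ∑ h ∈ Finset.range H, ∑ s,
          (∑ a, occ μ₁ P πb h s a) * (∑ a, |πopt h s a - πb h s a|)
        + LU * (2 * H + 1) * ∑ h ∈ Finset.range H, ∑ s, ∑ a,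
            |occ μ₁ Phat πb h s a - occ μ₁ P πb h s a| := by
  set T2 : ℝ := ∑ h ∈ Finset.range H, ∑ s, ∑ a,
      |occ μ₁ Phat πb h s a - occ μ₁ P πb h s a| with hT2
  set C : ℝ := ∑ h ∈ Finset.range H, ∑ s,
      (∑ a, occ μ₁ P πb h s a) * (∑ a, |πopt h s a - πb h s a|) with hC
  -- D terms for Phat
  set D : ℕ → ℝ := fun k => ∑ s,
      (∑ a, occ μ₁ Phat πb k s a) * (∑ a, |πopt k s a - πb k s a|) with hD
  have hDnn : ∀ k, 0 ≤ D k := by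
    intro k
    apply Finset.sum_nonneg; intro s _
    exact mul_nonneg (Finset.sum_nonneg fun a _ => occ_nonneg hμ₁ hPhat hπb k s a)
      (Finset.sum_nonneg fun a _ => abs_nonneg _)
  -- T1 bound
  have hT1 : ∑ h ∈ Finset.range H, ∑ s, ∑ a,
      |occ μ₁ Phat πopt h s a - occ μ₁ Phat πb h s a| ≤
      (H : ℝ) * ∑ k ∈ Finset.range H, D k := by
    calc ∑ h ∈ Finset.range H, ∑ s, ∑ a, |occ μ₁ Phat πopt h s a - occ μ₁ Phat πb h s a|
        ≤ ∑ h ∈ Finset.range H, ∑ k ∈ Finset.range (h+1), D k := by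
          apply Finset.sum_le_sum; intro h _
          exact occ_policy_diff μ₁ hμ₁ Phat hPhat πopt πb hπopt hπb h
      _ ≤ ∑ h ∈ Finset.range H, ∑ k ∈ Finset.range H, D k := by
          apply Finset.sum_le_sum; intro h hh
          apply Finset.sum_le_sum_of_subset_of_nonneg
          · exact Finset.range_subset_range.2 (Finset.mem_range.1 hh)
          · intro k _ _; exact hDnn k
      _ = (H : ℝ) * ∑ k ∈ Finset.range H, D k := by
          rw [Finset.sum_const, Finset.card_range, nsmul_eq_mul]
  -- D ≤ C-term + 2 * per-level T2
  have hDC : ∑ k ∈ Finset.range H, D k ≤ C + 2 * T2 := by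
    rw [hC, hT2, Finset.mul_sum, ← Finset.sum_add_distrib]
    apply Finset.sum_le_sum; intro k _
    rw [hD]
    rw [Finset.mul_sum, ← Finset.sum_add_distrib]
    apply Finset.sum_le_sum; intro s _
    have hc2 : ∑ a, |πopt k s a - πb k s a| ≤ 2 := by
      calc ∑ a, |πopt k s a - πb k s a| ≤ ∑ a, (πopt k s a + πb k s a) := by
            apply Finset.sum_le_sum; intro a _
            refine (abs_sub _ _).trans ?_
            rw [abs_of_nonneg ((hπopt k s).1 a), abs_of_nonneg ((hπb k s).1 a)]
        _ = 2 := by rw [Finset.sum_add_distrib, (hπopt k s).2, (hπb k s).2]; norm_num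
    have hcnn : 0 ≤ ∑ a, |πopt k s a - πb k s a| :=
      Finset.sum_nonneg fun a _ => abs_nonneg _
    have hsplit : ∑ a, occ μ₁ Phat πb k s a ≤
        (∑ a, occ μ₁ P πb k s a) + ∑ a, |occ μ₁ Phat πb k s a - occ μ₁ P πb k s a| := by
      rw [← Finset.sum_add_distrib]
      apply Finset.sum_le_sum; intro a _
      have := le_abs_self (occ μ₁ Phat πb k s a - occ μ₁ P πb k s a)
      linarith
    calc (∑ a, occ μ₁ Phat πb k s a) * (∑ a, |πopt k s a - πb k s a|)
        ≤ ((∑ a, occ μ₁ P πb k s a) + ∑ a, |occ μ₁ Phat πb k s a - occ μ₁ P πb k s a|) *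
          (∑ a, |πopt k s a - πb k s a|) := by
          apply mul_le_mul_of_nonneg_right hsplit hcnn
      _ = (∑ a, occ μ₁ P πb k s a) * (∑ a, |πopt k s a - πb k s a|) +
          (∑ a, |occ μ₁ Phat πb k s a - occ μ₁ P πb k s a|) *
          (∑ a, |πopt k s a - πb k s a|) := by ring
      _ ≤ (∑ a, occ μ₁ P πb k s a) * (∑ a, |πopt k s a - πb k s a|) +
          2 * ∑ a, |occ μ₁ Phat πb k s a - occ μ₁ P πb k s a| := by
          have hnn : 0 ≤ ∑ a, |occ μ₁ Phat πb k s a - occ μ₁ P πb k s a| :=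
            Finset.sum_nonneg fun a _ => abs_nonneg _
          nlinarith [mul_le_mul_of_nonneg_left hc2 hnn]
  -- Lipschitz chain
  have hchain : U (occ μ₁ P πstar) - U (occ μ₁ P πb) ≤
      LU * ∑ h ∈ Finset.range H, ∑ s, ∑ a,
        |occ μ₁ Phat πopt h s a - occ μ₁ P πb h s a| := by
    have h1 := hLip (occ μ₁ Phat πopt) (occ μ₁ P πb)
    have h2 := le_abs_self (U (occ μ₁ Phat πopt) - U (occ μ₁ P πb))
    linarith
  have htri : ∑ h ∈ Finset.range H, ∑ s, ∑ a,
      |occ μ₁ Phat πopt h s a - occ μ₁ P πb h s a| ≤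
      (∑ h ∈ Finset.range H, ∑ s, ∑ a,
        |occ μ₁ Phat πopt h s a - occ μ₁ Phat πb h s a|) + T2 := by
    rw [hT2, ← Finset.sum_add_distrib]
    apply Finset.sum_le_sum; intro h _
    rw [← Finset.sum_add_distrib]
    apply Finset.sum_le_sum; intro s _
    rw [← Finset.sum_add_distrib]
    apply Finset.sum_le_sum; intro a _
    exact abs_sub_le _ _ _
  have hT2nn : 0 ≤ T2 := Finset.sum_nonneg fun h _ => Finset.sum_nonneg fun s _ =>
    Finset.sum_nonneg fun a _ => abs_nonneg _
  have hHnn : (0:ℝ) ≤ H := Nat.cast_nonneg H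
  have key : U (occ μ₁ P πstar) - U (occ μ₁ P πb) ≤ LU * ((H:ℝ) * (C + 2*T2) + T2) := by
    refine hchain.trans ?_
    apply mul_le_mul_of_nonneg_left _ hLU
    refine htri.trans ?_
    have := hT1.trans (mul_le_mul_of_nonneg_left hDC hHnn)
    linarith
  calc U (occ μ₁ P πstar) - U (occ μ₁ P πb) ≤ LU * ((H:ℝ) * (C + 2*T2) + T2) := key
    _ = LU * H * C + LU * (2 * H + 1) * T2 := by ring
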